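/- If (S₁,R₁) and (S₂,R₂) are positive group presentations in amalgam position, then (S₁∪S₂, R₁∪R₂) is a presentation of the amalgamated product ⟨S₁|R₁⟩ *_{G'} ⟨S₂|R₂⟩, where G' is the subgroup generated by S₁∩S₂ (identified in both factors). -/

import Mathlib

namespace ArtinConj

/-- A word over `S ∪ S⁻¹`: a letter is a generator together with a sign
(`true` = positive letter `s`, `false` = negative letter `s⁻¹`). -/
abbrev Word (S : Type) := List (S × Bool)

/-- The positive word associated to a list of generators. -/
def pos {S : Type} (v : List S) : Word S := v.map fun s => (s, true)

/-- The formal inverse of a word. -/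
def winv {S : Type} (w : Word S) : Word S := (w.map fun p => (p.1, !p.2)).reverse

/-- A presentation `(S, R)` is positive if all relations `v = v'` have both
sides nonempty positive words. -/
def Positive {S : Type} (R : Set (List S × List S)) : Prop :=
  ∀ p ∈ R, p.1 ≠ [] ∧ p.2 ≠ []

/-- `v = v'` is a relation of `R` (relations are unoriented). -/
def InR {S : Type} (R : Set (List S × List S)) (v v' : List S) : Prop :=
  (v, v') ∈ R ∨ (v', v) ∈ R

/-- Special transformations of types `0`, `1`, `2ℓ`, `2r` associated with a
positive presentation. -/
inductive Step {S : Type} (R : Set (List S × List S)) : Word S → Word S → Prop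
  /-- type 0 : remove a trivial pair `s s⁻¹` or `s⁻¹ s`. -/
  | free (w₁ w₂ : Word S) (s : S) (e : Bool) :
      Step R (w₁ ++ [(s, e), (s, !e)] ++ w₂) (w₁ ++ w₂)
  /-- type 1 : replace a factor `v` by `v'` for a relation `v = v'`. -/
  | rel (w₁ w₂ : Word S) (v v' : List S) (h : InR R v v') :
      Step R (w₁ ++ pos v ++ w₂) (w₁ ++ pos v' ++ w₂)
  /-- type 1 : replace a factor `v⁻¹` by `v'⁻¹` for a relation `v = v'`. -/
  | relInv (w₁ w₂ : Word S) (v v' : List S) (h : InR R v v') :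
      Step R (w₁ ++ winv (pos v) ++ w₂) (w₁ ++ winv (pos v') ++ w₂)
  /-- type 2r : replace `v⁻¹ v'` by `u u'⁻¹` where `v u = v' u'` is a relation,
  `v, v'` nonempty. -/
  | rev2r (w₁ w₂ : Word S) (v v' u u' : List S) (hv : v ≠ []) (hv' : v' ≠ [])
      (h : InR R (v ++ u) (v' ++ u')) :
      Step R (w₁ ++ winv (pos v) ++ pos v' ++ w₂) (w₁ ++ pos u ++ winv (pos u') ++ w₂)
  /-- type 2ℓ : replace `v v'⁻¹` by `u⁻¹ u'` where `u v = u' v'` is a relation,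
  `v, v'` nonempty. -/
  | rev2l (w₁ w₂ : Word S) (v v' u u' : List S) (hv : v ≠ []) (hv' : v' ≠ [])
      (h : InR R (u ++ v) (u' ++ v')) :
      Step R (w₁ ++ pos v ++ winv (pos v') ++ w₂) (w₁ ++ winv (pos u) ++ pos u' ++ w₂)

/-- `w ⇝_{0,1,2} w'`. -/
def Rw {S : Type} (R : Set (List S × List S)) : Word S → Word S → Prop :=
  Relation.ReflTransGen (Step R)

/-- Evaluation of a word in a group, given an interpretation of the generators. -/
def evalW {S G : Type} [Group G] (f : S → G) (w : Word S) : G :=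
  (w.map fun p => if p.2 then f p.1 else (f p.1)⁻¹).prod

/-- The set of elements of the free group corresponding to the relations of `R`. -/
def rels {S : Type} (R : Set (List S × List S)) : Set (FreeGroup S) :=
  {x | ∃ p ∈ R, x = evalW FreeGroup.of (pos p.1) * (evalW FreeGroup.of (pos p.2))⁻¹}

/-- The element of the presented group `⟨S | R⟩` represented by a word. -/
def evalG {S : Type} (R : Set (List S × List S)) (w : Word S) :
    PresentedGroup (rels R) :=
  evalW (fun s => (PresentedGroup.of s : PresentedGroup (rels R))) w

/-- Property `H` : every word representing `1` can be transformed to the empty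
word using special transformations of types `0`, `1`, `2` only. -/
def PropertyH {S : Type} (R : Set (List S × List S)) : Prop :=
  ∀ w : Word S, evalG R w = 1 → Rw R w []


open Monoid

/-- The two-element family of types consisting of `G₁` and `G₂`. -/
def Gfam (G₁ G₂ : Type) : Bool → Type
  | true => G₁
  | false => G₂

instance {G₁ G₂ : Type} [Group G₁] [Group G₂] : ∀ b, Group (Gfam G₁ G₂ b)
  | true => inferInstanceAs (Group G₁)
  | false => inferInstanceAs (Group G₂)

/-- The inclusion of subtypes induced by an inclusion of subsets. -/
def incl {S : Type} {A B : Set S} (h : A ⊆ B) : ↥A → ↥B := fun s => ⟨s.1, h s.2⟩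

/-- The subgroup of `⟨Sᵢ | Rᵢ⟩` generated by the common generators `C ⊆ Sᵢ`. -/
def commonSubgroup {S : Type} {C Sᵢ : Set S} (h : C ⊆ Sᵢ)
    (Rᵢ : Set (List ↥Sᵢ × List ↥Sᵢ)) : Subgroup (PresentedGroup (rels Rᵢ)) :=
  Subgroup.closure (Set.range fun s : ↥C =>
    (PresentedGroup.of (incl h s) : PresentedGroup (rels Rᵢ)))

theorem evalW_hom {S G K : Type} [Group G] [Group K] (g : G →* K) (f : S → G) (w : Word S) :
    g (evalW f w) = evalW (fun s => g (f s)) w := by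
  induction w with
  | nil => simp [evalW]
  | cons p w ih =>
    rcases p with ⟨s, e⟩
    simp only [evalW, List.map_cons, List.prod_cons] at ih ⊢
    rw [map_mul, ih]
    cases e <;> simp

theorem evalW_pos_map {A B G : Type} [Group G] (f : B → G) (j : A → B) (v : List A) :
    evalW f (pos (v.map j)) = evalW (fun a => f (j a)) (pos v) := by
  simp [evalW, pos, List.map_map, Function.comp_def]

theorem lift_evalW {S G : Type} [Group G] (f : S → G) (w : Word S) :
    FreeGroup.lift f (evalW FreeGroup.of w) = evalW f w := by
  rw [evalW_hom]
  simp [FreeGroup.lift_apply_of]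

theorem mk_evalW {S : Type} (R : Set (List S × List S)) (w : Word S) :
    PresentedGroup.mk (rels R) (evalW FreeGroup.of w) = evalG R w := by
  rw [evalW_hom]
  rfl

theorem rel_eval {S : Type} (R : Set (List S × List S)) {p : List S × List S} (hp : p ∈ R) :
    evalG R (pos p.1) = evalG R (pos p.2) := by
  have h : PresentedGroup.mk (rels R)
      (evalW FreeGroup.of (pos p.1) * (evalW FreeGroup.of (pos p.2))⁻¹) = 1 :=
    (QuotientGroup.eq_one_iff _).2 (Subgroup.subset_normalClosure ⟨p, hp, rfl⟩)
  rw [map_mul, map_inv, mk_evalW, mk_evalW, mul_inv_eq_one] at h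
  exact h


/-- if the positive presentations `(S₁, R₁)` and `(S₂, R₂)` are in
amalgam position (the identity on `S₁ ∩ S₂` induces an isomorphism `e` of the
subgroups `G'₁ ≅ G'₂` generated by `S₁ ∩ S₂`), then `(S₁ ∪ S₂, R₁ ∪ R₂)` is a
presentation of the amalgamated product `⟨S₁|R₁⟩ *_{G'} ⟨S₂|R₂⟩`, via an
isomorphism respecting the generators. -/
theorem union_presents_amalgamated_product {S : Type} (S₁ S₂ : Set S)
    (R₁ : Set (List ↥S₁ × List ↥S₁)) (R₂ : Set (List ↥S₂ × List ↥S₂))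
    (hpos₁ : Positive R₁) (hpos₂ : Positive R₂)
    (e : commonSubgroup Set.inter_subset_left R₁ ≃*
         commonSubgroup (S := S) (C := S₁ ∩ S₂) Set.inter_subset_right R₂)
    (he : ∀ s : ↥(S₁ ∩ S₂),
      e ⟨PresentedGroup.of (incl Set.inter_subset_left s),
          Subgroup.subset_closure (Set.mem_range_self s)⟩ =
        ⟨PresentedGroup.of (incl Set.inter_subset_right s),
          Subgroup.subset_closure (Set.mem_range_self s)⟩)
    (φ : ∀ b : Bool, ↥(commonSubgroup Set.inter_subset_left R₁) →*
        Gfam (PresentedGroup (rels R₁)) (PresentedGroup (rels R₂)) b)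
    (hφt : φ true = (commonSubgroup Set.inter_subset_left R₁).subtype)
    (hφf : φ false = ((commonSubgroup (S := S) (C := S₁ ∩ S₂)
        Set.inter_subset_right R₂).subtype).comp e.toMonoidHom)
    (Rbig : Set (List ↥(S₁ ∪ S₂) × List ↥(S₁ ∪ S₂)))
    (hRbig : Rbig =
      (Prod.map (List.map (incl Set.subset_union_left))
        (List.map (incl Set.subset_union_left)) '' R₁) ∪
      (Prod.map (List.map (incl Set.subset_union_right))
        (List.map (incl Set.subset_union_right)) '' R₂)) :
    ∃ iso : PresentedGroup (rels Rbig) ≃* PushoutI φ,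
      (∀ s : ↥S₁, iso (PresentedGroup.of (incl Set.subset_union_left s)) =
        PushoutI.of (φ := φ) true (PresentedGroup.of s)) ∧
      (∀ s : ↥S₂, iso (PresentedGroup.of (incl Set.subset_union_right s)) =
        PushoutI.of (φ := φ) false (PresentedGroup.of s)) := by
  classical
  -- The generator map into the pushout.
  let F : ↥(S₁ ∪ S₂) → PushoutI φ := fun t =>
    if h : t.1 ∈ S₁ then PushoutI.of (φ := φ) true (PresentedGroup.of ⟨t.1, h⟩)
    else PushoutI.of (φ := φ) false (PresentedGroup.of ⟨t.1, t.2.resolve_left h⟩)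
  -- Amalgamation: the two images of a common generator agree in the pushout.
  have key : ∀ (a : S) (h₁ : a ∈ S₁) (h₂ : a ∈ S₂),
      PushoutI.of (φ := φ) true (PresentedGroup.of ⟨a, h₁⟩) =
      PushoutI.of (φ := φ) false (PresentedGroup.of ⟨a, h₂⟩) := by
    intro a h₁ h₂
    have hx : (PresentedGroup.of (incl Set.inter_subset_left (⟨a, ⟨h₁, h₂⟩⟩ : ↥(S₁ ∩ S₂))) :
        PresentedGroup (rels R₁)) ∈ commonSubgroup Set.inter_subset_left R₁ :=
      Subgroup.subset_closure (Set.mem_range_self _)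
    calc PushoutI.of (φ := φ) true (PresentedGroup.of ⟨a, h₁⟩)
        = PushoutI.of (φ := φ) true (φ true ⟨_, hx⟩) := by rw [hφt]; rfl
      _ = PushoutI.base φ ⟨_, hx⟩ := PushoutI.of_apply_eq_base φ true _
      _ = PushoutI.of (φ := φ) false (φ false ⟨_, hx⟩) :=
          (PushoutI.of_apply_eq_base φ false _).symm
      _ = PushoutI.of (φ := φ) false (PresentedGroup.of ⟨a, h₂⟩) := by
          rw [hφf]
          exact congrArg _ (congrArg Subtype.val (he ⟨a, ⟨h₁, h₂⟩⟩))
  have hofj₁ : ∀ s : ↥S₁, F (incl Set.subset_union_left s) =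
      PushoutI.of (φ := φ) true (PresentedGroup.of s) := fun s => dif_pos s.2
  have hofj₂ : ∀ s : ↥S₂, F (incl Set.subset_union_right s) =
      PushoutI.of (φ := φ) false (PresentedGroup.of s) := by
    intro s
    by_cases h : s.1 ∈ S₁
    · exact (dif_pos h).trans (key s.1 h s.2)
    · exact dif_neg h
  -- evaluation of mapped positive words
  have e1 : ∀ v : List ↥S₁, evalW F (pos (v.map (incl Set.subset_union_left))) =
      PushoutI.of (φ := φ) true (evalG R₁ (pos v)) := by
    intro v
    rw [evalW_pos_map, show (fun a : ↥S₁ => F (incl Set.subset_union_left a)) = fun a =>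
      PushoutI.of (φ := φ) true (PresentedGroup.of a) from funext hofj₁]
    exact (evalW_hom _ _ _).symm
  have e2 : ∀ v : List ↥S₂, evalW F (pos (v.map (incl Set.subset_union_right))) =
      PushoutI.of (φ := φ) false (evalG R₂ (pos v)) := by
    intro v
    rw [evalW_pos_map, show (fun a : ↥S₂ => F (incl Set.subset_union_right a)) = fun a =>
      PushoutI.of (φ := φ) false (PresentedGroup.of a) from funext hofj₂]
    exact (evalW_hom _ _ _).symm
  -- F kills the relators
  have hFrel : ∀ r ∈ rels Rbig, FreeGroup.lift F r = 1 := by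
    rintro r ⟨p, hp, rfl⟩
    rw [map_mul, map_inv, lift_evalW, lift_evalW, mul_inv_eq_one]
    rw [hRbig] at hp
    rcases hp with ⟨q, hq, rfl⟩ | ⟨q, hq, rfl⟩
    · rw [show (Prod.map (List.map (incl Set.subset_union_left))
          (List.map (incl Set.subset_union_left)) q).1 = q.1.map (incl Set.subset_union_left)
          from rfl,
        show (Prod.map (List.map (incl Set.subset_union_left))
          (List.map (incl Set.subset_union_left)) q).2 = q.2.map (incl Set.subset_union_left)
          from rfl, e1, e1]
      exact congrArg _ (rel_eval R₁ hq)
    · rw [show (Prod.map (List.map (incl Set.subset_union_right))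
          (List.map (incl Set.subset_union_right)) q).1 = q.1.map (incl Set.subset_union_right)
          from rfl,
        show (Prod.map (List.map (incl Set.subset_union_right))
          (List.map (incl Set.subset_union_right)) q).2 = q.2.map (incl Set.subset_union_right)
          from rfl, e2, e2]
      exact congrArg _ (rel_eval R₂ hq)
  -- the backwards maps on the two factors
  have hrel₁ : ∀ r ∈ rels R₁, FreeGroup.lift
      (fun s : ↥S₁ => (PresentedGroup.of (incl Set.subset_union_left s) :
        PresentedGroup (rels Rbig))) r = 1 := by
    rintro r ⟨q, hq, rfl⟩
    rw [map_mul, map_inv, lift_evalW, lift_evalW, mul_inv_eq_one]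
    have h : ∀ v : List ↥S₁, evalW (fun s : ↥S₁ =>
        (PresentedGroup.of (incl Set.subset_union_left s) : PresentedGroup (rels Rbig)))
        (pos v) = evalG Rbig (pos (v.map (incl Set.subset_union_left))) :=
      fun v => (evalW_pos_map _ _ _).symm
    rw [h, h]
    exact rel_eval Rbig (show _ ∈ Rbig by
      rw [hRbig]; exact Or.inl ⟨q, hq, rfl⟩)
  have hrel₂ : ∀ r ∈ rels R₂, FreeGroup.lift
      (fun s : ↥S₂ => (PresentedGroup.of (incl Set.subset_union_right s) :
        PresentedGroup (rels Rbig))) r = 1 := by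
    rintro r ⟨q, hq, rfl⟩
    rw [map_mul, map_inv, lift_evalW, lift_evalW, mul_inv_eq_one]
    have h : ∀ v : List ↥S₂, evalW (fun s : ↥S₂ =>
        (PresentedGroup.of (incl Set.subset_union_right s) : PresentedGroup (rels Rbig)))
        (pos v) = evalG Rbig (pos (v.map (incl Set.subset_union_right))) :=
      fun v => (evalW_pos_map _ _ _).symm
    rw [h, h]
    exact rel_eval Rbig (show _ ∈ Rbig by
      rw [hRbig]; exact Or.inr ⟨q, hq, rfl⟩)
  let ψ₁ : PresentedGroup (rels R₁) →* PresentedGroup (rels Rbig) :=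
    PresentedGroup.toGroup hrel₁
  let ψ₂ : PresentedGroup (rels R₂) →* PresentedGroup (rels Rbig) :=
    PresentedGroup.toGroup hrel₂
  have hψ₁of : ∀ s : ↥S₁, ψ₁ (PresentedGroup.of s) =
      PresentedGroup.of (incl Set.subset_union_left s) :=
    fun s => PresentedGroup.toGroup.of hrel₁
  have hψ₂of : ∀ s : ↥S₂, ψ₂ (PresentedGroup.of s) =
      PresentedGroup.of (incl Set.subset_union_right s) :=
    fun s => PresentedGroup.toGroup.of hrel₂
  let ψf : ∀ b, Gfam (PresentedGroup (rels R₁)) (PresentedGroup (rels R₂)) b →*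
      PresentedGroup (rels Rbig) := fun b => match b with
    | true => ψ₁
    | false => ψ₂
  have hcompat : ∀ b, (ψf b).comp (φ b) = ψ₁.comp (φ true) := by
    intro b
    cases b
    · -- b = false
      ext x
      obtain ⟨g, hg⟩ := x
      simp only [MonoidHom.comp_apply]
      induction hg using Subgroup.closure_induction with
      | mem g' hg' =>
        obtain ⟨s, rfl⟩ := hg'
        show ψ₂ (φ false ⟨_, _⟩) = ψ₁ (φ true ⟨_, _⟩)
        rw [hφt, hφf]
        refine Eq.trans (congrArg (⇑ψ₂) (congrArg Subtype.val (he s))) ?_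
        rw [hψ₂of]
        refine Eq.trans (congrArg PresentedGroup.of (Subtype.ext rfl :
          incl Set.subset_union_right (incl Set.inter_subset_right s) =
          incl Set.subset_union_left (incl Set.inter_subset_left s))) ?_
        exact (hψ₁of _).symm
      | one =>
        show ψ₂ (φ false 1) = ψ₁ (φ true 1)
        exact (congrArg ψ₂ (map_one (φ false))).trans ((map_one ψ₂).trans
          ((map_one ψ₁).symm.trans (congrArg ψ₁ (map_one (φ true))).symm))
      | mul a b ha hb iha ihb =>
        show ψ₂ (φ false (⟨a, ha⟩ * ⟨b, hb⟩)) = ψ₁ (φ true (⟨a, ha⟩ * ⟨b, hb⟩))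
        rw [map_mul, map_mul]
        exact (map_mul ψ₂ _ _).trans ((congrArg₂ (· * ·) iha ihb).trans (map_mul ψ₁ _ _).symm)
      | inv a ha iha =>
        show ψ₂ (φ false (⟨a, ha⟩)⁻¹) = ψ₁ (φ true (⟨a, ha⟩)⁻¹)
        rw [map_inv, map_inv]
        exact (map_inv ψ₂ _).trans ((congrArg Inv.inv iha).trans (map_inv ψ₁ _).symm)
    · -- b = true
      rfl
  let Φ : PresentedGroup (rels Rbig) →* PushoutI φ := PresentedGroup.toGroup hFrel
  have hΦof : ∀ t : ↥(S₁ ∪ S₂), Φ (PresentedGroup.of t) = F t :=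
    fun t => PresentedGroup.toGroup.of hFrel
  let Ψ : PushoutI φ →* PresentedGroup (rels Rbig) :=
    PushoutI.lift ψf (ψ₁.comp (φ true)) hcompat
  have hΨof : ∀ (i : Bool) g, Ψ (PushoutI.of (φ := φ) i g) = ψf i g :=
    fun i g => PushoutI.lift_of _ _ _ _
  have comp1 : Ψ.comp Φ = MonoidHom.id _ := by
    refine PresentedGroup.ext fun t => ?_
    simp only [MonoidHom.comp_apply, MonoidHom.id_apply]
    rw [hΦof]
    by_cases h : t.1 ∈ S₁
    · rw [show F t = PushoutI.of (φ := φ) true (PresentedGroup.of ⟨t.1, h⟩) from dif_pos h]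
      refine (hΨof true (PresentedGroup.of ⟨t.1, h⟩)).trans ?_
      exact (hψ₁of _).trans (congrArg PresentedGroup.of (Subtype.ext rfl))
    · rw [show F t = PushoutI.of (φ := φ) false
          (PresentedGroup.of ⟨t.1, t.2.resolve_left h⟩) from dif_neg h]
      refine (hΨof false (PresentedGroup.of ⟨t.1, t.2.resolve_left h⟩)).trans ?_
      exact (hψ₂of _).trans (congrArg PresentedGroup.of (Subtype.ext rfl))
  have comp2 : Φ.comp Ψ = MonoidHom.id _ := by
    refine PushoutI.hom_ext_nonempty fun i => ?_
    cases i
    · refine PresentedGroup.ext fun s => ?_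
      show Φ (Ψ (PushoutI.of (φ := φ) false (PresentedGroup.of s))) = PushoutI.of (φ := φ) false (PresentedGroup.of s)
      refine (congrArg (⇑Φ) (hΨof false (PresentedGroup.of s))).trans ?_
      show Φ (ψ₂ (PresentedGroup.of s)) = _
      rw [hψ₂of, hΦof]
      exact hofj₂ s
    · refine PresentedGroup.ext fun s => ?_
      show Φ (Ψ (PushoutI.of (φ := φ) true (PresentedGroup.of s))) = PushoutI.of (φ := φ) true (PresentedGroup.of s)
      refine (congrArg (⇑Φ) (hΨof true (PresentedGroup.of s))).trans ?_
      show Φ (ψ₁ (PresentedGroup.of s)) = _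
      rw [hψ₁of, hΦof]
      exact hofj₁ s
  refine ⟨MonoidHom.toMulEquiv Φ Ψ comp1 comp2, fun s => ?_, fun s => ?_⟩
  · show Φ (PresentedGroup.of (incl Set.subset_union_left s)) = _
    rw [hΦof]
    exact hofj₁ s
  · show Φ (PresentedGroup.of (incl Set.subset_union_right s)) = _
    rw [hΦof]
    exact hofj₂ s

end ArtinConj
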